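/- Let 1 ≤ k ≤ n ≤ m, and let α_1, ..., α_n ∈ F_{q^m} be linearly independent over F_q. Then there exists a nonzero vector (β_1,...,β_n) ∈ F_{q^m}^n such that ∑_{i=1}^n α_i^{q^{j-1}} β_i^{q^{h-1}} = 0 for all j ∈ [k] and h ∈ [n-k]; moreover β_1, ..., β_n are linearly independent over F_q, and the Gabidulin code G_{n,n-k}(β_1,...,β_n) is the dual code of the Gabidulin code G_{n,k}(α_1,...,α_n). -/

import Mathlib

/-- The linear functional `w ↦ ∑ i, w i * u i` given by dotting with a fixed vector `u`. -/
noncomputable def dotFunctional {F : Type*} [Field F] {n : ℕ} (u : Fin n → F) :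
    (Fin n → F) →ₗ[F] F :=
  ∑ i, u i • (LinearMap.proj i : (Fin n → F) →ₗ[F] F)

/-- The dual code `C^⊥ = {u ∈ F^n : ∑ i, u i * v i = 0 for all v ∈ C}`. -/
noncomputable def dualCode {F : Type*} [Field F] {n : ℕ} (C : Submodule F (Fin n → F)) :
    Submodule F (Fin n → F) :=
  ⨅ v ∈ C, LinearMap.ker (dotFunctional v)

/-- The Gabidulin code `G_{n,k}(α_1, …, α_n)`: the `F`-row space of the Moore matrix
`(α_j^{q^{i-1}})_{i ∈ [k], j ∈ [n]}`, i.e. all evaluation vectors of `q`-linearized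
polynomials `f(X) = ∑_{i=1}^k c_i X^{q^{i-1}}`. -/
noncomputable def gabidulin (Fq : Type*) [Field Fq] [Fintype Fq] {F : Type*} [Field F]
    [Algebra Fq F] {n : ℕ} (k : ℕ) (α : Fin n → F) : Submodule F (Fin n → F) :=
  LinearMap.range (Matrix.vecMulLinear
    (Matrix.of fun (i : Fin k) (j : Fin n) => α j ^ (Fintype.card Fq ^ (i : ℕ))))

open Polynomial Finset Module

section Aux

variable {Fq F : Type*} [Field Fq] [Fintype Fq] [Field F] [Algebra Fq F]

/-- A `q`-linearized polynomial of `q`-degree `< n` vanishing at `n` `F_q`-linearly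
independent points has all coefficients zero. -/
lemma qpoly_coeff_eq_zero [FiniteDimensional Fq F] {n : ℕ} {α : Fin n → F}
    (hα : LinearIndependent Fq α)
    (c : ℕ → F) (hc : ∀ i, ∑ t ∈ Finset.range n, c t * α i ^ Fintype.card Fq ^ t = 0) :
    ∀ t < n, c t = 0 := by
  classical
  set q : ℕ := Fintype.card Fq with hqdef
  have hq2 : 2 ≤ q := Fintype.one_lt_card
  -- characteristic setup
  set p : ℕ := ringChar Fq with hpdef
  haveI : CharP Fq p := ringChar.charP Fq
  obtain ⟨e, hp, hq⟩ := FiniteField.card Fq p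
  haveI : Fact p.Prime := ⟨hp⟩
  haveI : CharP F p := charP_of_injective_algebraMap (algebraMap Fq F).injective p
  haveI : Finite F := Module.finite_of_finite Fq
  haveI : Fintype F := Fintype.ofFinite F
  have hpowadd : ∀ (x y : F) (s : ℕ), (x + y) ^ q ^ s = x ^ q ^ s + y ^ q ^ s := by
    intro x y s
    simp only [hqdef, hq, ← pow_mul]
    exact add_pow_char_pow x y p (↑e * s)
  -- the q-linearized map
  set L : F →ₗ[Fq] F :=
    { toFun := fun x => ∑ t ∈ Finset.range n, c t * x ^ q ^ t
      map_add' := by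
        intro x y
        simp only [hpowadd, mul_add]
        rw [Finset.sum_add_distrib]
      map_smul' := by
        intro a x
        simp only [Algebra.smul_def, RingHom.id_apply]
        rw [Finset.mul_sum]
        refine Finset.sum_congr rfl fun t _ => ?_
        rw [mul_pow, ← map_pow, FiniteField.pow_card_pow]
        ring } with hL
  have hLα : ∀ i, L (α i) = 0 := fun i => hc i
  have hLspan : ∀ x ∈ Submodule.span Fq (Set.range α), L x = 0 := by
    intro x hx
    have : Submodule.span Fq (Set.range α) ≤ LinearMap.ker L := by
      rw [Submodule.span_le]
      rintro _ ⟨i, rfl⟩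
      exact hLα i
    exact this hx
  intro t0 ht0
  by_contra hct0
  -- the polynomial
  set P : F[X] := ∑ t ∈ Finset.range n, C (c t) * X ^ q ^ t with hP
  have hinj : ∀ t1 ∈ Finset.range n, q ^ t1 = q ^ t0 → t1 = t0 :=
    fun t1 _ h => Nat.pow_right_injective hq2 h
  have hcoeff : P.coeff (q ^ t0) = c t0 := by
    rw [hP, Polynomial.finset_sum_coeff]
    rw [Finset.sum_eq_single t0]
    · simp
    · intro t1 ht1 hne
      rw [Polynomial.coeff_C_mul, Polynomial.coeff_X_pow, if_neg, mul_zero]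
      exact fun h => hne (hinj t1 ht1 h.symm)
    · intro h
      exact absurd (Finset.mem_range.2 ht0) h
  have hPne : P ≠ 0 := fun h => hct0 (by rw [← hcoeff, h, Polynomial.coeff_zero])
  have hdeg : P.natDegree ≤ q ^ (n - 1) := by
    apply Polynomial.natDegree_sum_le_of_forall_le
    intro t ht
    rw [Finset.mem_range] at ht
    refine (Polynomial.natDegree_C_mul_X_pow_le _ _).trans ?_
    exact Nat.pow_le_pow_right (by omega) (by omega : t ≤ n - 1)
  have heval : ∀ x, P.eval x = L x := by
    intro x
    rw [hP]
    simp only [Polynomial.eval_finset_sum, Polynomial.eval_mul, Polynomial.eval_C,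
      Polynomial.eval_pow, Polynomial.eval_X]
    rfl
  -- counting roots
  set S : Set F := (Submodule.span Fq (Set.range α) : Set F) with hS
  haveI : Fintype S := Fintype.ofFinite _
  have hsub : S.toFinset ⊆ P.roots.toFinset := by
    intro x hx
    rw [Set.mem_toFinset] at hx
    rw [Multiset.mem_toFinset, Polynomial.mem_roots hPne]
    exact (by rw [Polynomial.IsRoot, heval]; exact hLspan x hx)
  have hcardS : S.toFinset.card = q ^ n := by
    rw [Set.toFinset_card]
    have : Fintype.card S = q ^ Module.finrank Fq (Submodule.span Fq (Set.range α)) :=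
      card_eq_pow_finrank (K := Fq)
    rw [this, finrank_span_eq_card hα, Fintype.card_fin]
  have hcardroots : P.roots.toFinset.card ≤ q ^ (n - 1) :=
    le_trans (Multiset.toFinset_card_le _) (le_trans (Polynomial.card_roots' P) hdeg)
  have := le_trans (le_of_eq hcardS.symm) (le_trans (Finset.card_le_card hsub) hcardroots)
  exact absurd this (by
    apply not_le.2
    exact Nat.pow_lt_pow_right hq2 (by omega))

/-- The rows of a Moore matrix of `F_q`-linearly independent elements are
`F`-linearly independent. -/
lemma moore_rows_li [FiniteDimensional Fq F] {n k : ℕ} (hkn : k ≤ n) {α : Fin n → F}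
    (hα : LinearIndependent Fq α) :
    LinearIndependent F (fun (s : Fin k) => fun (j : Fin n) =>
      α j ^ Fintype.card Fq ^ (s : ℕ)) := by
  classical
  rw [Fintype.linearIndependent_iff]
  intro g hg s
  set c : ℕ → F := fun t => if h : t < k then g ⟨t, h⟩ else 0 with hc
  have hsum : ∀ i, ∑ t ∈ Finset.range n, c t * α i ^ Fintype.card Fq ^ t = 0 := by
    intro i
    have h1 : ∑ t ∈ Finset.range n, c t * α i ^ Fintype.card Fq ^ t
        = ∑ t ∈ Finset.range k, c t * α i ^ Fintype.card Fq ^ t := by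
      refine (Finset.sum_subset (Finset.range_subset_range.2 hkn) ?_).symm
      intro t _ ht
      rw [Finset.mem_range] at ht
      rw [hc]
      simp only [dif_neg ht, zero_mul]
    rw [h1, ← Fin.sum_univ_eq_sum_range (fun t => c t * α i ^ Fintype.card Fq ^ t) k]
    have := congrFun hg i
    simp only [Finset.sum_apply, Pi.smul_apply, smul_eq_mul, Pi.zero_apply] at this
    rw [← this]
    refine Finset.sum_congr rfl fun t _ => ?_
    rw [hc]
    simp [t.isLt]
  have := qpoly_coeff_eq_zero hα c hsum s (lt_of_lt_of_le s.isLt hkn)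
  rw [hc] at this
  simpa [s.isLt] using this

lemma dotFunctional_apply {F : Type*} [Field F] {n : ℕ} (u w : Fin n → F) :
    dotFunctional u w = ∑ i, u i * w i := by
  simp [dotFunctional]

lemma mem_dualCode {F : Type*} [Field F] {n : ℕ} (C : Submodule F (Fin n → F))
    (u : Fin n → F) : u ∈ dualCode C ↔ ∀ v ∈ C, ∑ i, v i * u i = 0 := by
  simp [dualCode, Submodule.mem_iInf, dotFunctional_apply]

lemma dualCode_range_vecMulLinear {F : Type*} [Field F] {n k : ℕ}
    (M : Matrix (Fin k) (Fin n) F) :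
    dualCode (LinearMap.range M.vecMulLinear) = LinearMap.ker M.mulVecLin := by
  ext u
  rw [mem_dualCode, LinearMap.mem_ker]
  have key : ∀ x : Fin k → F, ∑ i, (M.vecMulLinear x) i * u i
      = dotProduct x (M.mulVec u) := by
    intro x
    rw [show ∑ i, (M.vecMulLinear x) i * u i
        = dotProduct (Matrix.vecMul x M) u from rfl]
    rw [← Matrix.dotProduct_mulVec]
  constructor
  · intro h
    funext s
    have := h (M.vecMulLinear (Pi.single s 1)) ⟨Pi.single s 1, rfl⟩
    rw [key] at this
    rw [show (0 : Fin k → F) s = 0 from rfl, ← this]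
    simp [Matrix.mulVecLin_apply, Matrix.mulVec, dotProduct, Pi.single_apply, mul_comm]
  · rintro h v ⟨x, rfl⟩
    rw [key, show M.mulVec u = 0 from h, dotProduct_zero]

lemma finrank_ker_mulVecLin_of_rows_li {F : Type*} [Field F] {n k : ℕ}
    (M : Matrix (Fin k) (Fin n) F) (h : LinearIndependent F (fun i : Fin k => M i)) :
    Module.finrank F (LinearMap.ker M.mulVecLin) = n - k := by
  have h1 : finrank F (LinearMap.range M.vecMulLinear) = k := by
    rw [range_vecMulLinear, finrank_span_eq_card (show LinearIndependent F M.row from h), Fintype.card_fin]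
  have heq : M.transpose.mulVecLin = M.vecMulLinear :=
    LinearMap.ext fun x => by
      rw [Matrix.mulVecLin_apply, Matrix.vecMulLinear_apply, Matrix.mulVec_transpose]
  have h2 : finrank F (LinearMap.range M.mulVecLin) = k := by
    have : M.rank = k := by
      rw [← Matrix.rank_transpose, Matrix.rank, heq, h1]
    exact this
  have h3 := LinearMap.finrank_range_add_finrank_ker M.mulVecLin
  rw [h2, Module.finrank_fin_fun] at h3
  omega

lemma finrank_range_vecMulLinear_of_rows_li {F : Type*} [Field F] {n k : ℕ}
    (M : Matrix (Fin k) (Fin n) F) (h : LinearIndependent F (fun i : Fin k => M i)) :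
    Module.finrank F (LinearMap.range M.vecMulLinear) = k := by
  rw [range_vecMulLinear, finrank_span_eq_card (show LinearIndependent F M.row from h), Fintype.card_fin]

/-- A nonzero vector in the kernel of the `(n-1) × n` Moore matrix of a linearly
independent family has `F_q`-linearly independent coordinates. -/
lemma gamma_li [FiniteDimensional Fq F] {n : ℕ} (hn : 1 ≤ n) {α γ : Fin n → F}
    (hα : LinearIndependent Fq α) (hγ0 : γ ≠ 0)
    (hγ : ∀ s : Fin (n - 1), ∑ i, α i ^ Fintype.card Fq ^ (s : ℕ) * γ i = 0) :
    LinearIndependent Fq γ := by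
  classical
  set q : ℕ := Fintype.card Fq with hqdef
  have hq2 : 2 ≤ q := Fintype.one_lt_card
  set p : ℕ := ringChar Fq with hpdef
  haveI : CharP Fq p := ringChar.charP Fq
  obtain ⟨e, hp, hq⟩ := FiniteField.card Fq p
  haveI : Fact p.Prime := ⟨hp⟩
  haveI : CharP F p := charP_of_injective_algebraMap (algebraMap Fq F).injective p
  have hφ : ∀ z : F, (iterateFrobenius F p (e : ℕ)) z = z ^ q := by
    intro z
    rw [iterateFrobenius_def, hqdef, hq]
  -- the rows
  set r : Fin (n - 1) → (Fin n → F) := fun s => fun j => α j ^ q ^ (s : ℕ) with hr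
  set W : Submodule F (Fin n → F) := LinearMap.ker (dotFunctional γ) with hW
  -- finrank W = n - 1
  obtain ⟨i0, hi0⟩ : ∃ i, γ i ≠ 0 := Function.ne_iff.1 hγ0
  have hsurj : Function.Surjective (dotFunctional γ) := by
    intro y
    refine ⟨(y * (γ i0)⁻¹) • (Pi.single i0 1 : Fin n → F), ?_⟩
    rw [map_smul, dotFunctional_apply]
    have : ∑ i, γ i * (Pi.single i0 1 : Fin n → F) i = γ i0 := by
      rw [Finset.sum_eq_single i0] <;> simp +contextual [Pi.single_apply]
    rw [this, smul_eq_mul]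
    field_simp
  have hfrW : finrank F W = n - 1 := by
    have h3 := LinearMap.finrank_range_add_finrank_ker (dotFunctional γ)
    rw [LinearMap.range_eq_top.2 hsurj, finrank_top, finrank_self,
      Module.finrank_fin_fun] at h3
    rw [hW]
    omega
  have hrli : LinearIndependent F r := moore_rows_li (Nat.sub_le n 1) hα
  have hrW : ∀ s, r s ∈ W := by
    intro s
    rw [hW, LinearMap.mem_ker, dotFunctional_apply]
    rw [← hγ s]
    exact Finset.sum_congr rfl fun i _ => mul_comm _ _
  have hle : Submodule.span F (Set.range r) ≤ W := by
    rw [Submodule.span_le]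
    rintro _ ⟨s, rfl⟩
    exact hrW s
  have hspanW : Submodule.span F (Set.range r) = W :=
    Submodule.eq_of_le_of_finrank_eq hle
      (by rw [finrank_span_eq_card hrli, Fintype.card_fin, hfrW])
  -- main argument
  rw [Fintype.linearIndependent_iff]
  intro g hg
  set c' : Fin n → F := fun i => algebraMap Fq F (g i) with hc'
  have hc'W : c' ∈ W := by
    rw [hW, LinearMap.mem_ker, dotFunctional_apply]
    rw [← hg]
    exact Finset.sum_congr rfl fun i _ => by
      rw [Algebra.smul_def]; ring
  rw [← hspanW] at hc'W
  obtain ⟨lam, hlam⟩ := (Submodule.mem_span_range_iff_exists_fun F).1 hc'W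
  set lam' : ℕ → F := fun s => if h : s < n - 1 then lam ⟨s, h⟩ else 0 with hlam'
  set c : ℕ → F := fun u => (if u = 0 then 0 else lam' (u - 1) ^ q) - lam' u with hc
  have hn1 : n - 1 + 1 = n := by omega
  have hLrepr : ∀ i, ∑ s ∈ Finset.range (n - 1), lam' s * α i ^ q ^ s = c' i := by
    intro i
    rw [← Fin.sum_univ_eq_sum_range (fun s => lam' s * α i ^ q ^ s) (n - 1)]
    have := congrFun hlam i
    simp only [Finset.sum_apply, Pi.smul_apply, smul_eq_mul] at this
    rw [← this]
    refine Finset.sum_congr rfl fun s _ => ?_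
    rw [hlam']
    simp [s.isLt, hr]
  have hsum : ∀ i, ∑ u ∈ Finset.range n, c u * α i ^ q ^ u = 0 := by
    intro i
    have hApart : ∀ x : F, ∑ u ∈ Finset.range n,
        (if u = 0 then 0 else lam' (u - 1) ^ q) * x ^ q ^ u
        = (∑ s ∈ Finset.range (n - 1), lam' s * x ^ q ^ s) ^ q := by
      intro x
      have h' := Finset.sum_range_succ'
        (fun u => (if u = 0 then 0 else lam' (u - 1) ^ q) * x ^ q ^ u) (n - 1)
      rw [hn1] at h'
      rw [h', ← hφ (∑ s ∈ Finset.range (n - 1), lam' s * x ^ q ^ s), map_sum]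
      simp only [Nat.add_sub_cancel, Nat.succ_ne_zero, ite_false, eq_self_iff_true, ite_true,
        zero_mul, add_zero]
      refine Finset.sum_congr rfl fun s _ => ?_
      rw [hφ, mul_pow, ← pow_mul, ← pow_succ]
    have hBpart : ∀ x : F, ∑ u ∈ Finset.range n, lam' u * x ^ q ^ u
        = ∑ s ∈ Finset.range (n - 1), lam' s * x ^ q ^ s := by
      intro x
      have h' := Finset.sum_range_succ (fun u => lam' u * x ^ q ^ u) (n - 1)
      rw [hn1] at h'
      rw [h', show lam' (n - 1) = 0 from dif_neg (lt_irrefl _)]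
      rw [zero_mul, add_zero]
    have claim1 : ∀ x : F, ∑ u ∈ Finset.range n, c u * x ^ q ^ u =
        (∑ s ∈ Finset.range (n - 1), lam' s * x ^ q ^ s) ^ q
          - ∑ s ∈ Finset.range (n - 1), lam' s * x ^ q ^ s := by
      intro x
      rw [← hApart, ← hBpart, ← Finset.sum_sub_distrib]
      refine Finset.sum_congr rfl fun u _ => ?_
      rw [hc]
      ring
    rw [claim1, hLrepr i]
    show (algebraMap Fq F (g i)) ^ q - algebraMap Fq F (g i) = 0
    rw [← map_pow, FiniteField.pow_card, sub_self]
  have hc0 := qpoly_coeff_eq_zero hα c hsum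
  have lamzero : ∀ s, lam' s = 0 := by
    intro s
    induction s with
    | zero =>
      have := hc0 0 hn
      rw [hc] at this
      simpa using this
    | succ s ih =>
      by_cases h : s + 1 < n - 1
      · have := hc0 (s + 1) (by omega)
        rw [hc] at this
        simp only [Nat.succ_ne_zero, if_neg, Nat.add_sub_cancel] at this
        rw [ih, zero_pow (by omega : q ≠ 0)] at this
        simpa using this
      · rw [hlam']
        simp [h]
  intro i
  have hc'0 : c' = 0 := by
    rw [← hlam]
    refine Finset.sum_eq_zero fun s _ => ?_
    have h1 : lam' (s : ℕ) = lam ⟨(s : ℕ), s.isLt⟩ := dif_pos s.isLt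
    rw [Fin.eta] at h1
    rw [← h1, lamzero, zero_smul]
  have h2 : c' i = 0 := by rw [hc'0]; rfl
  exact (algebraMap Fq F).injective
    (show algebraMap Fq F (g i) = algebraMap Fq F 0 by rw [map_zero]; exact h2)

end Aux

/-- Duality of Gabidulin codes: for `1 ≤ k ≤ n ≤ m = [F_{q^m} : F_q]` and
`α_1, …, α_n ∈ F_{q^m}` linearly independent over `F_q`, there is a nonzero
`β = (β_1, …, β_n)` with `∑ i, α_i^{q^{j-1}} β_i^{q^{h-1}} = 0` for all `j ∈ [k]`,
`h ∈ [n-k]`; moreover `β_1, …, β_n` are linearly independent over `F_q` and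
`G_{n,n-k}(β_1, …, β_n)` is the dual code of `G_{n,k}(α_1, …, α_n)`. -/
theorem gabidulin_duality {Fq F : Type*} [Field Fq] [Fintype Fq] [Field F] [Algebra Fq F]
    [FiniteDimensional Fq F] {n k : ℕ} (hk : 1 ≤ k) (hkn : k ≤ n)
    (hnm : n ≤ Module.finrank Fq F) (α : Fin n → F) (hα : LinearIndependent Fq α) :
    ∃ β : Fin n → F, β ≠ 0 ∧
      (∀ (j : Fin k) (h : Fin (n - k)),
        ∑ i, α i ^ (Fintype.card Fq ^ (j : ℕ)) * β i ^ (Fintype.card Fq ^ (h : ℕ)) = 0) ∧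
      LinearIndependent Fq β ∧
      gabidulin Fq (n - k) β = dualCode (gabidulin Fq k α) := by
  classical
  set q : ℕ := Fintype.card Fq with hqdef
  have hq2 : 2 ≤ q := Fintype.one_lt_card
  set m : ℕ := Module.finrank Fq F with hm
  have hn1 : 1 ≤ n := le_trans hk hkn
  set p : ℕ := ringChar Fq with hpdef
  haveI : CharP Fq p := ringChar.charP Fq
  obtain ⟨e, hp, hqcard⟩ := FiniteField.card Fq p
  haveI : Fact p.Prime := ⟨hp⟩
  haveI : CharP F p := charP_of_injective_algebraMap (algebraMap Fq F).injective p
  haveI : Finite F := Module.finite_of_finite Fq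
  haveI : Fintype F := Fintype.ofFinite F
  have hφ : ∀ (s : ℕ) (z : F), (iterateFrobenius F p ((e : ℕ) * s)) z = z ^ q ^ s := by
    intro s z
    rw [iterateFrobenius_def, pow_mul, hqdef, hqcard]
  have hcardF : Fintype.card F = q ^ m := card_eq_pow_finrank (K := Fq)
  have hFq : ∀ z : F, z ^ q ^ m = z := by
    intro z
    rw [← hcardF]
    exact FiniteField.pow_card z
  -- the kernel vector γ
  set M' : Matrix (Fin (n - 1)) (Fin n) F :=
    Matrix.of (fun (s : Fin (n - 1)) (j : Fin n) => α j ^ q ^ (s : ℕ)) with hM'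
  have hM'li : LinearIndependent F (fun i : Fin (n - 1) => M' i) :=
    moore_rows_li (Nat.sub_le n 1) hα
  have hkerM' : Module.finrank F (LinearMap.ker M'.mulVecLin) = n - (n - 1) :=
    finrank_ker_mulVecLin_of_rows_li M' hM'li
  have hkerne : LinearMap.ker M'.mulVecLin ≠ ⊥ := by
    intro h
    rw [h, finrank_bot] at hkerM'
    omega
  obtain ⟨γ, hγmem, hγ0⟩ := Submodule.ne_bot_iff _ |>.1 hkerne
  have hγ : ∀ s : Fin (n - 1), ∑ i, α i ^ q ^ (s : ℕ) * γ i = 0 := by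
    intro s
    have := congrFun (LinearMap.mem_ker.1 hγmem) s
    rw [Matrix.mulVecLin_apply] at this
    simpa [Matrix.mulVec, dotProduct, M'] using this
  -- construct β
  set t : ℕ := n - k - 1 with ht
  have htm : t ≤ m := by omega
  set β : Fin n → F := fun i => γ i ^ q ^ (m - t) with hβ
  have hβγ : ∀ (i : Fin n) (h : ℕ), h ≤ t → (β i ^ q ^ h) ^ q ^ (t - h) = γ i := by
    intro i h hh
    rw [hβ]
    rw [← pow_mul, ← pow_mul, ← pow_add, ← pow_add,
      show m - t + (h + (t - h)) = m by omega]
    exact hFq (γ i)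
  -- orthogonality
  have horth : ∀ (j : Fin k) (h : Fin (n - k)),
      ∑ i, α i ^ q ^ (j : ℕ) * β i ^ q ^ (h : ℕ) = 0 := by
    intro j h
    have hkn' : k < n := by
      have := h.isLt
      omega
    have hht : (h : ℕ) ≤ t := by
      have := h.isLt
      omega
    set S : F := ∑ i, α i ^ q ^ (j : ℕ) * β i ^ q ^ (h : ℕ) with hSdef
    have hSpow : S ^ q ^ (t - (h : ℕ)) = 0 := by
      rw [← hφ (t - (h : ℕ)) S, hSdef, map_sum]
      have hjlt : (j : ℕ) + (t - (h : ℕ)) < n - 1 := by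
        have := j.isLt
        omega
      rw [← hγ ⟨(j : ℕ) + (t - (h : ℕ)), hjlt⟩]
      refine Finset.sum_congr rfl fun i _ => ?_
      rw [hφ, mul_pow, hβγ i (h : ℕ) hht, ← pow_mul, ← pow_add]
    have : q ^ (t - (h : ℕ)) ≠ 0 := by positivity
    exact pow_eq_zero_iff this |>.1 hSpow
  -- β is linearly independent
  have hγli : LinearIndependent Fq γ := gamma_li hn1 hα hγ0 hγ
  set ψ : F →ₗ[Fq] F :=
    { toFun := fun z => z ^ q ^ (m - t)
      map_add' := by
        intro a b
        show (a + b) ^ q ^ (m - t) = a ^ q ^ (m - t) + b ^ q ^ (m - t)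
        rw [← hφ (m - t) a, ← hφ (m - t) b, ← hφ (m - t) (a + b), map_add]
      map_smul' := by
        intro a x
        simp only [Algebra.smul_def, RingHom.id_apply]
        rw [mul_pow, ← map_pow, FiniteField.pow_card_pow] } with hψ
  have hψinj : LinearMap.ker ψ = ⊥ := by
    rw [LinearMap.ker_eq_bot]
    intro a b hab
    have : (iterateFrobenius F p ((e : ℕ) * (m - t))) a
        = (iterateFrobenius F p ((e : ℕ) * (m - t))) b := by
      rw [hφ, hφ]
      exact hab
    exact (iterateFrobenius F p ((e : ℕ) * (m - t))).injective this
  have hβli : LinearIndependent Fq β := by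
    have := hγli.map' ψ hψinj
    exact this
  have hβne : β ≠ 0 := by
    intro h
    exact hβli.ne_zero ⟨0, hn1⟩ (congrFun h _)
  -- the codes
  set MA : Matrix (Fin k) (Fin n) F :=
    Matrix.of (fun (i : Fin k) (j : Fin n) => α j ^ q ^ (i : ℕ)) with hMA
  set MB : Matrix (Fin (n - k)) (Fin n) F :=
    Matrix.of (fun (i : Fin (n - k)) (j : Fin n) => β j ^ q ^ (i : ℕ)) with hMB
  have hgabA : gabidulin Fq k α = LinearMap.range MA.vecMulLinear := rfl
  have hgabB : gabidulin Fq (n - k) β = LinearMap.range MB.vecMulLinear := rfl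
  have hALi : LinearIndependent F (fun i : Fin k => MA i) := moore_rows_li hkn hα
  have hBLi : LinearIndependent F (fun i : Fin (n - k) => MB i) :=
    moore_rows_li (Nat.sub_le n k) hβli
  have hdc : dualCode (gabidulin Fq k α) = LinearMap.ker MA.mulVecLin := by
    rw [hgabA]
    exact dualCode_range_vecMulLinear MA
  have hsub : gabidulin Fq (n - k) β ≤ dualCode (gabidulin Fq k α) := by
    rw [hgabB, hdc]
    rintro v ⟨x, rfl⟩
    rw [LinearMap.mem_ker]
    funext j
    show dotProduct (MA j) (Matrix.vecMul x MB) = 0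
    have : dotProduct (MA j) (Matrix.vecMul x MB)
        = ∑ h, x h * ∑ i, MA j i * MB h i := by
      rw [dotProduct]
      simp only [Matrix.vecMul, dotProduct, Finset.mul_sum]
      rw [Finset.sum_comm]
      refine Finset.sum_congr rfl fun h _ => ?_
      exact Finset.sum_congr rfl fun i _ => by ring
    rw [this]
    refine Finset.sum_eq_zero fun h _ => ?_
    rw [show ∑ i, MA j i * MB h i = 0 from horth j h, mul_zero]
  have hfr1 : finrank F (dualCode (gabidulin Fq k α)) = n - k := by
    rw [hdc]
    exact finrank_ker_mulVecLin_of_rows_li MA hALi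
  have hfr2 : finrank F (gabidulin Fq (n - k) β) = n - k := by
    rw [hgabB]
    exact finrank_range_vecMulLinear_of_rows_li MB hBLi
  refine ⟨β, hβne, horth, hβli, ?_⟩
  exact Submodule.eq_of_le_of_finrank_eq hsub (by rw [hfr1, hfr2])
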